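/- There exists an absolute constant c > 0 such that for every sufficiently small δ > 0 and every sufficiently large N (depending on δ), there exists a subset A ⊆ {1, …, N} with |A| ≥ δN such that the number of pairs (n, r) with r ≥ 1 and n, n+r, n+2r all in A is at most δ^{c·log(1/δ)} · N². -/

import Mathlib

open Finset

set_option maxHeartbeats 1000000

private lemma behrend_mod_aux {L u v P Q : ℕ} (hu : u < L) (hv : v < L)
    (h : L * P + u = L * Q + v) : u = v := by
  have h2 := congrArg (fun t => t % L) h
  simpa [Nat.mul_add_mod, Nat.mod_eq_of_lt hu, Nat.mod_eq_of_lt hv] using h2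

/-- **Behrend's example.** There is an absolute constant `c > 0` so that for all
sufficiently small `δ > 0` and all sufficiently large `N` (depending on `δ`),
some subset `A ⊆ {1, …, N}` with `|A| ≥ δN` contains at most
`δ ^ (c log (1/δ)) · N²` three-term arithmetic progressions. -/
theorem behrend_example :
    ∃ c : ℝ, 0 < c ∧ ∃ δ₀ : ℝ, 0 < δ₀ ∧ ∀ δ : ℝ, 0 < δ → δ ≤ δ₀ →
      ∃ N₀ : ℕ, ∀ N : ℕ, N₀ ≤ N →
        ∃ A : Finset ℕ, A ⊆ Finset.Icc 1 N ∧ δ * N ≤ A.card ∧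
          ((((Finset.Icc 1 N) ×ˢ (Finset.Icc 1 N)).filter
              (fun p => p.1 ∈ A ∧ p.1 + p.2 ∈ A ∧ p.1 + 2 * p.2 ∈ A)).card : ℝ)
            ≤ δ ^ (c * Real.log (1 / δ)) * N ^ 2 := by
  refine ⟨1/32, by norm_num, Real.exp (-100), Real.exp_pos _, ?_⟩
  intro δ hδ hδ₀
  set x : ℝ := Real.log (1/δ) with hxdef
  have hxlog : x = -Real.log δ := by rw [hxdef, one_div, Real.log_inv]
  have hx100 : 100 ≤ x := by
    rw [hxlog, le_neg]
    calc Real.log δ ≤ Real.log (Real.exp (-100)) := by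
          exact Real.log_le_log hδ hδ₀
      _ = -100 := Real.log_exp _
  have hx0 : 0 < x := by linarith
  -- the block structure
  set M : ℕ := ⌈Real.exp (x^2/32)⌉₊ with hMdef
  have hM1 : Real.exp (x^2/32) ≤ (M : ℝ) := Nat.le_ceil _
  have hMpos : 0 < M := Nat.ceil_pos.2 (Real.exp_pos _)
  have hM2 : (M : ℝ) ≤ Real.exp (x^2/32 + 1) := by
    have h1 : (M : ℝ) < Real.exp (x^2/32) + 1 :=
      Nat.ceil_lt_add_one (Real.exp_pos _).le
    have h2 : Real.exp (x^2/32) + 1 ≤ 2 * Real.exp (x^2/32) := by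
      have := Real.one_le_exp (by positivity : (0:ℝ) ≤ x^2/32)
      linarith
    have h3 : 2 * Real.exp (x^2/32) ≤ Real.exp (x^2/32 + 1) := by
      rw [Real.exp_add]
      have : (2:ℝ) ≤ Real.exp 1 := by
        have := Real.add_one_le_exp (1:ℝ); linarith
      nlinarith [Real.exp_pos (x^2/32)]
    linarith
  have hlogM : Real.log M ≤ x^2/25 := by
    have h1 : Real.log M ≤ x^2/32 + 1 := by
      rw [Real.log_le_iff_le_exp (by exact_mod_cast hMpos)]
      exact hM2
    nlinarith
  have hsqrt : Real.sqrt (Real.log M) ≤ x/5 := by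
    rw [show x/5 = Real.sqrt ((x/5)^2) from (Real.sqrt_sq (by positivity)).symm]
    apply Real.sqrt_le_sqrt
    nlinarith
  -- density of the Salem-Spencer set
  have hroth : 6 * δ * M ≤ (rothNumberNat M : ℝ) := by
    have h1 : (M : ℝ) * Real.exp (-4 * Real.sqrt (Real.log M)) ≤ rothNumberNat M :=
      Behrend.roth_lower_bound
    have h2 : 6 * δ ≤ Real.exp (-4 * Real.sqrt (Real.log M)) := by
      have hδx : δ = Real.exp (-x) := by
        rw [hxlog, neg_neg, Real.exp_log hδ]
      have h3 : Real.exp (-(4*x/5)) ≤ Real.exp (-4 * Real.sqrt (Real.log M)) := by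
        apply Real.exp_le_exp.2
        nlinarith
      have h4 : 6 * δ ≤ Real.exp (-(4*x/5)) := by
        rw [hδx, show -(4*x/5) = x/5 + -x by ring, Real.exp_add]
        have h6 : (6:ℝ) ≤ Real.exp (x/5) := by
          have h7 : Real.exp 20 ≤ Real.exp (x/5) := Real.exp_le_exp.2 (by linarith)
          have := Real.add_one_le_exp (20:ℝ)
          linarith
        nlinarith [Real.exp_pos (-x)]
      linarith
    have hMpos' : (0:ℝ) < M := by exact_mod_cast hMpos
    nlinarith
  obtain ⟨S, hSsub, hScard, hSfree⟩ := rothNumberNat_spec M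
  have hSM : ∀ s ∈ S, s < M := fun s hs => Finset.mem_range.1 (hSsub hs)
  set L : ℕ := 3 * M with hLdef
  have hLpos : 0 < L := by omega
  refine ⟨18 * M, ?_⟩
  intro N hN
  set k : ℕ := N / L with hkdef
  have hkL : L * k ≤ N := Nat.mul_div_le N L
  have hNlt : N < L * k + L := by
    have h1 : L * k + N % L = N := Nat.div_add_mod N L
    have h2 := Nat.mod_lt N hLpos
    linarith [h1, h2]
  have hk1 : 1 ≤ k := by
    rw [hkdef, Nat.one_le_div_iff hLpos]; omega
  have hN2Lk : N ≤ 2 * (L * k) := by nlinarith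
  -- the set A
  refine ⟨((range k) ×ˢ S).image (fun p => p.1 * L + p.2 + 1), ?_, ?_, ?_⟩
  · intro a ha
    simp only [Finset.mem_image, Finset.mem_product, Finset.mem_range] at ha
    obtain ⟨⟨j, s⟩, ⟨hj, hs⟩, rfl⟩ := ha
    have hsM := hSM s hs
    simp only [Finset.mem_Icc]
    constructor
    · omega
    · have h1 : j * L + s + 1 ≤ (j+1) * L := by
        have : s + 1 ≤ L := by omega
        calc j * L + s + 1 = j * L + (s + 1) := by ring
          _ ≤ j * L + L := by omega
          _ = (j+1) * L := by ring
      have h2 : (j+1) * L ≤ k * L := Nat.mul_le_mul_right L hj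
      calc j * L + s + 1 ≤ k * L := h1.trans h2
        _ = L * k := Nat.mul_comm _ _
        _ ≤ N := hkL
  · -- cardinality
    have hinj : Set.InjOn (fun p : ℕ × ℕ => p.1 * L + p.2 + 1)
        (((range k) ×ˢ S : Finset (ℕ × ℕ)) : Set (ℕ × ℕ)) := by
      rintro ⟨j1, s1⟩ h1 ⟨j2, s2⟩ h2 heq
      simp only [Finset.mem_coe, Finset.mem_product, Finset.mem_range] at h1 h2
      simp only at heq
      have hs1 := hSM s1 h1.2
      have hs2 := hSM s2 h2.2
      have heq' : L * j1 + s1 = L * j2 + s2 := by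
        rw [Nat.mul_comm L j1, Nat.mul_comm L j2]; omega
      have hss : s1 = s2 := behrend_mod_aux (by omega) (by omega) heq'
      have hjj : j1 = j2 := by
        have : L * j1 = L * j2 := by omega
        exact Nat.eq_of_mul_eq_mul_left hLpos this
      simp [hss, hjj]
    rw [Finset.card_image_of_injOn hinj, Finset.card_product, Finset.card_range, hScard]
    have hkcast : (N : ℝ) ≤ 6 * M * k := by
      have : (N : ℝ) ≤ 2 * (L * k : ℕ) := by exact_mod_cast hN2Lk
      push_cast at this ⊢
      rw [hLdef] at this
      push_cast at this
      linarith
    have hk0 : (0:ℝ) ≤ k := Nat.cast_nonneg _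
    push_cast
    nlinarith
  · -- counting 3-APs
    set A := ((range k) ×ˢ S).image (fun p => p.1 * L + p.2 + 1) with hAdef
    have hmemA : ∀ a ∈ A, ∃ j s, s ∈ S ∧ a = j * L + s + 1 := by
      intro a ha
      simp only [hAdef, Finset.mem_image, Finset.mem_product, Finset.mem_range] at ha
      obtain ⟨⟨j, s⟩, ⟨_, hs⟩, rfl⟩ := ha
      exact ⟨j, s, hs, rfl⟩
    have hdvd : ∀ p : ℕ × ℕ, p ∈ ((Finset.Icc 1 N) ×ˢ (Finset.Icc 1 N)).filter
        (fun p => p.1 ∈ A ∧ p.1 + p.2 ∈ A ∧ p.1 + 2 * p.2 ∈ A) →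
        p ∈ (Finset.Icc 1 N) ×ˢ ((Finset.Icc 1 N).filter (fun r => L ∣ r)) := by
      rintro ⟨n, r⟩ hp
      simp only [Finset.mem_filter, Finset.mem_product] at hp ⊢
      obtain ⟨⟨hn, hr⟩, h1, h2, h3⟩ := hp
      refine ⟨hn, hr, ?_⟩
      obtain ⟨a, s1, hs1, he1⟩ := hmemA _ h1
      obtain ⟨b, s2, hs2, he2⟩ := hmemA _ h2
      obtain ⟨c, s3, hs3, he3⟩ := hmemA _ h3
      have hm1 := hSM s1 hs1
      have hm2 := hSM s2 hs2
      have hm3 := hSM s3 hs3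
      have hkey : L * (a + c) + (s1 + s3) = L * (b + b) + (s2 + s2) := by
        have e1 : L * (a+c) = a * L + c * L := by ring
        have e2 : L * (b+b) = b * L + b * L := by ring
        linarith [he1, he2, he3]
      have hss : s1 + s3 = s2 + s2 := behrend_mod_aux (by omega) (by omega) hkey
      have hs12 : s1 = s2 :=
        hSfree (Finset.mem_coe.2 hs1) (Finset.mem_coe.2 hs2) (Finset.mem_coe.2 hs3) hss
      have habL : a * L + r = b * L := by
        rw [hs12] at he1
        linarith [he1, he2]
      have : L ∣ a * L + r := habL ▸ dvd_mul_left L b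
      exact (Nat.dvd_add_right (dvd_mul_left L a)).1 this
    have hcount : (((Finset.Icc 1 N) ×ˢ (Finset.Icc 1 N)).filter
        (fun p => p.1 ∈ A ∧ p.1 + p.2 ∈ A ∧ p.1 + 2 * p.2 ∈ A)).card ≤ N * (N / L) := by
      calc _ ≤ ((Finset.Icc 1 N) ×ˢ ((Finset.Icc 1 N).filter (fun r => L ∣ r))).card :=
            Finset.card_le_card hdvd
        _ = N * ((Finset.Icc 1 N).filter (fun r => L ∣ r)).card := by
            rw [Finset.card_product, Nat.card_Icc]; norm_num
        _ ≤ N * (N / L) := by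
            apply Nat.mul_le_mul_left
            have : ((Finset.Icc 1 N).filter (fun r => L ∣ r)).card ≤
                (Finset.Icc 1 (N / L)).card := by
              apply Finset.card_le_card_of_injOn (fun r => r / L)
              · intro r hr
                simp only [Finset.mem_coe, Finset.mem_filter, Finset.mem_Icc] at hr ⊢
                obtain ⟨⟨hr1, hrN⟩, hdr⟩ := hr
                constructor
                · rw [Nat.one_le_div_iff hLpos]
                  exact Nat.le_of_dvd (by omega) hdr
                · exact Nat.div_le_div_right hrN
              · intro r1 h1 r2 h2 he
                simp only [Finset.coe_filter, Set.mem_setOf_eq, Finset.mem_Icc] at h1 h2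
                have he' : r1 / L = r2 / L := he
                rw [← Nat.div_mul_cancel h1.2, ← Nat.div_mul_cancel h2.2, he']
            simpa [Nat.card_Icc] using this
    -- final numeric estimate
    have hrw : δ ^ ((1:ℝ)/32 * Real.log (1/δ)) = Real.exp (-(x^2/32)) := by
      rw [Real.rpow_def_of_pos hδ, ← hxdef, hxlog]
      congr 1
      ring
    rw [hrw]
    have hc1 : (((((Finset.Icc 1 N) ×ˢ (Finset.Icc 1 N)).filter
        (fun p => p.1 ∈ A ∧ p.1 + p.2 ∈ A ∧ p.1 + 2 * p.2 ∈ A)).card : ℝ))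
        ≤ (N : ℝ) * ((N / L : ℕ) : ℝ) := by exact_mod_cast hcount
    have hc2 : ((N / L : ℕ) : ℝ) ≤ (N : ℝ) / (L : ℝ) := Nat.cast_div_le
    have hLR : Real.exp (x^2/32) ≤ (L : ℝ) := by
      have : (M : ℝ) ≤ (L : ℝ) := by exact_mod_cast Nat.le_mul_of_pos_left M (by norm_num)
      linarith
    have hexp : (0:ℝ) < Real.exp (x^2/32) := Real.exp_pos _
    have hN0 : (0:ℝ) ≤ N := Nat.cast_nonneg _
    have hc3 : (N : ℝ) / (L : ℝ) ≤ (N : ℝ) * Real.exp (-(x^2/32)) := by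
      rw [show (N:ℝ) * Real.exp (-(x^2/32)) = (N:ℝ) / Real.exp (x^2/32) by
        rw [Real.exp_neg]; ring]
      gcongr
    calc (((((Finset.Icc 1 N) ×ˢ (Finset.Icc 1 N)).filter
        (fun p => p.1 ∈ A ∧ p.1 + p.2 ∈ A ∧ p.1 + 2 * p.2 ∈ A)).card : ℝ))
        ≤ (N : ℝ) * ((N / L : ℕ) : ℝ) := hc1
      _ ≤ (N : ℝ) * ((N : ℝ) / (L : ℝ)) := by nlinarith
      _ ≤ (N : ℝ) * ((N : ℝ) * Real.exp (-(x^2/32))) := by nlinarith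
      _ = Real.exp (-(x^2/32)) * (N:ℝ)^2 := by ring
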